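/- Let n be a sufficiently large power of two and m = n+1. Consider the random restriction ρ generated as follows: pigeons i = 1, 2, …, m are processed in order; independently with probability 1/4, pigeon i is assigned a hole chosen uniformly at random among the holes of [n] not yet assigned to an earlier pigeon, and otherwise pigeon i is left unassigned. Let T be a term over the variables P_{i,k} of BinPHP^{n+1}_n that mentions at least n/2 pigeons. Say that T evaluates to zero under ρ if for some literal P_{i,k}^b of T, pigeon i is assigned by ρ and the k-th bit of the binary representation of its assigned hole equals 1−b. Then the probability that T does not evaluate to zero under ρ is at most (5/6)^{n/16}. -/

import Mathlib

/-- A *term*: a partial assignment of Boolean values to variables (a conjunction of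
literals in which no variable occurs both positively and negatively).
The empty term `⊤` is `fun _ => none`. -/
def SATerm (V : Type) := V → Option Bool

/-- Extend a term by the literal `x^b`. -/
def SATerm.extend {V : Type} [DecidableEq V] (D : SATerm V) (x : V) (b : Bool) :
    SATerm V := fun y => if y = x then some b else D y

/-- The value `v(D ∧ x^b)`, with the convention that it is `0` whenever `D` contains the
literal complementary to `x^b`. -/
def evalLit {V : Type} [DecidableEq V] (v : SATerm V → ℝ) (D : SATerm V)
    (x : V) (b : Bool) : ℝ :=
  if D x = some (!b) then 0 else v (D.extend x b)

/-- The set of variables occurring in a term. -/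
def SATerm.vars {V : Type} (D : SATerm V) : Set V := {x | D x ≠ none}

/-- The number of literals of a term. -/
noncomputable def SATerm.size {V : Type} (D : SATerm V) : ℕ := D.vars.ncard
/-- The big disjunction `⋁_{k=1}^{r} P_{i,k}^{1−a_k}` saying that pigeon `i` does *not*
go to hole `a` (where `a_1…a_r` is the binary representation of `a`). -/
def holeClause (m r : ℕ) (i : Fin m) (a : ℕ) : List ((Fin m × Fin r) × Bool) :=
  (List.finRange r).map fun k => ((i, k), !(a.testBit k.val))

/-- The binary pigeonhole principle `BinPHP^m_n` (with `r = log₂ n` address bits):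
for every hole `a ∈ [n]` and all distinct pigeons `i ≠ i'`, the clause
`⋁_k P_{i,k}^{1−a_k} ∨ ⋁_k P_{i',k}^{1−a_k}`. -/
def BinPHP (m n r : ℕ) : Set (List ((Fin m × Fin r) × Bool)) :=
  {C | ∃ i i' : Fin m, ∃ a : Fin n,
      i ≠ i' ∧ C = holeClause m r i a.val ++ holeClause m r i' a.val}

/-- The set of pigeons mentioned by a term. -/
def mentions {m r : ℕ} (T : SATerm (Fin m × Fin r)) : Set (Fin m) :=
  {i | ∃ k : Fin r, T (i, k) ≠ none}

/-- The number of pigeons `j < i` assigned a hole by the restriction `ρ`. -/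
def assignedBefore {m n : ℕ} (ρ : Fin m → Option (Fin n)) (i : Fin m) : ℕ :=
  (Finset.univ.filter fun j => j < i ∧ (ρ j).isSome).card

/-- The probability weight contributed by pigeon `i` in the sequential random
restriction: with probability `1/4` pigeon `i` is assigned a hole chosen uniformly among
the holes not yet assigned to an earlier pigeon (each particular such hole having
probability `(1/4)·(n − #assigned earlier)⁻¹`), and otherwise (probability `3/4`) it is
left unassigned. -/
noncomputable def stepWeight {m : ℕ} (n : ℕ) (ρ : Fin m → Option (Fin n)) (i : Fin m) : ℝ :=
  match ρ i with
  | none => 3 / 4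
  | some _ => (1 / 4) * ((n : ℝ) - (assignedBefore ρ i : ℝ))⁻¹

/-- A restriction is a partial matching: no two pigeons get the same hole. -/
def IsPartialMatching {m n : ℕ} (ρ : Fin m → Option (Fin n)) : Prop :=
  ∀ i j a, ρ i = some a → ρ j = some a → i = j

open Classical in
/-- The probability of the outcome `ρ` under the sequential random restriction. -/
noncomputable def restrProb {m : ℕ} (n : ℕ) (ρ : Fin m → Option (Fin n)) : ℝ :=
  if IsPartialMatching ρ then ∏ i, stepWeight n ρ i else 0

/-- `T` evaluates to zero under `ρ`: for some literal `P_{i,k}^b` of `T`, pigeon `i` is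
assigned by `ρ` and the `k`-th bit of the binary representation of its hole is `1−b`. -/
def EvaluatesToZero {m n r : ℕ} (T : SATerm (Fin m × Fin r))
    (ρ : Fin m → Option (Fin n)) : Prop :=
  ∃ (i : Fin m) (k : Fin r) (b : Bool) (h : Fin n),
    T (i, k) = some b ∧ ρ i = some h ∧ h.val.testBit k.val = !b

open Finset

def assignedCount {m n : ℕ} (ρ : Fin m → Option (Fin n)) : ℕ :=
  (Finset.univ.filter fun j => (ρ j).isSome).card

lemma card_filter_succ {m : ℕ} (p : Fin (m+1) → Prop) [DecidablePred p] :
    (univ.filter p).card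
      = (univ.filter fun j : Fin m => p j.castSucc).card + (if p (Fin.last m) then 1 else 0) := by
  rw [Finset.card_filter, Finset.card_filter, Fin.sum_univ_castSucc]

lemma assignedBefore_snoc_castSucc {m n : ℕ} (ρ : Fin m → Option (Fin n))
    (x : Option (Fin n)) (i : Fin m) :
    assignedBefore (Fin.snoc ρ x) i.castSucc = assignedBefore ρ i := by
  classical
  unfold assignedBefore
  rw [card_filter_succ]
  have h1 : ¬ (Fin.last m < i.castSucc ∧ ((Fin.snoc ρ x : Fin (m+1) → Option (Fin n)) (Fin.last m)).isSome) := by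
    rintro ⟨h, -⟩; exact absurd h (not_lt.2 (Fin.castSucc_lt_last i).le)
  rw [if_neg h1, add_zero]
  congr 1
  apply Finset.filter_congr
  intro j _
  simp [Fin.castSucc_lt_castSucc_iff]

lemma assignedBefore_snoc_last {m n : ℕ} (ρ : Fin m → Option (Fin n)) (x : Option (Fin n)) :
    assignedBefore (Fin.snoc ρ x) (Fin.last m) = assignedCount ρ := by
  classical
  unfold assignedBefore assignedCount
  rw [card_filter_succ]
  have h1 : ¬ (Fin.last m < Fin.last m ∧ ((Fin.snoc ρ x : Fin (m+1) → Option (Fin n)) (Fin.last m)).isSome) := by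
    rintro ⟨h, -⟩; exact absurd h (lt_irrefl _)
  rw [if_neg h1, add_zero]
  congr 1
  apply Finset.filter_congr
  intro j _
  simp [Fin.castSucc_lt_last]

lemma assignedCount_snoc {m n : ℕ} (ρ : Fin m → Option (Fin n)) (x : Option (Fin n)) :
    assignedCount (Fin.snoc ρ x) = assignedCount ρ + (if x.isSome then 1 else 0) := by
  classical
  unfold assignedCount
  rw [card_filter_succ]
  congr 1
  · congr 1
    apply Finset.filter_congr
    intro j _; simp
  · simp

lemma assignedBefore_le_assignedCount {m n : ℕ} (ρ : Fin m → Option (Fin n)) (i : Fin m) :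
    assignedBefore ρ i ≤ assignedCount ρ := by
  classical
  apply Finset.card_le_card
  intro j; simp only [Finset.mem_filter, Finset.mem_univ, true_and]
  exact fun hj => hj.2

lemma stepWeight_snoc_castSucc {m n : ℕ} (ρ : Fin m → Option (Fin n)) (x : Option (Fin n)) (i : Fin m) :
    stepWeight n (Fin.snoc ρ x) i.castSucc = stepWeight n ρ i := by
  unfold stepWeight
  rw [assignedBefore_snoc_castSucc]
  have : (Fin.snoc ρ x : Fin (m+1) → Option (Fin n)) i.castSucc = ρ i := Fin.snoc_castSucc ..
  rw [this]

lemma stepWeight_snoc_last {m n : ℕ} (ρ : Fin m → Option (Fin n)) (x : Option (Fin n)) :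
    stepWeight n (Fin.snoc ρ x) (Fin.last m)
      = match x with
        | none => (3/4 : ℝ)
        | some _ => (1/4) * ((n : ℝ) - (assignedCount ρ : ℝ))⁻¹ := by
  unfold stepWeight
  rw [assignedBefore_snoc_last]
  have : (Fin.snoc ρ x : Fin (m+1) → Option (Fin n)) (Fin.last m) = x := Fin.snoc_last ..
  rw [this]

lemma isPartialMatching_snoc {m n : ℕ} (ρ : Fin m → Option (Fin n)) (x : Option (Fin n)) :
    IsPartialMatching (Fin.snoc ρ x) ↔
      IsPartialMatching ρ ∧ ∀ a, x = some a → ∀ j, ρ j ≠ some a := by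
  constructor
  · intro H
    constructor
    · intro i j a hi hj
      have := H i.castSucc j.castSucc a (by simpa using hi) (by simpa using hj)
      exact Fin.castSucc_injective m this
    · intro a hx j hj
      have := H (Fin.last m) j.castSucc a (by simpa using hx) (by simpa using hj)
      exact absurd this.symm (Fin.castSucc_lt_last j).ne
  · rintro ⟨H, Hx⟩ i j a hi hj
    induction i using Fin.lastCases with
    | last =>
      induction j using Fin.lastCases with
      | last => rfl
      | cast j =>
        simp only [Fin.snoc_last, Fin.snoc_castSucc] at hi hj
        exact absurd hj (Hx a hi j)
    | cast i =>
      induction j using Fin.lastCases with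
      | last =>
        simp only [Fin.snoc_last, Fin.snoc_castSucc] at hi hj
        exact absurd hi (Hx a hj i)
      | cast j =>
        simp only [Fin.snoc_castSucc] at hi hj
        exact congrArg Fin.castSucc (H i j a hi hj)

lemma restrProb_snoc {m n : ℕ} (ρ : Fin m → Option (Fin n)) (x : Option (Fin n)) :
    restrProb n (Fin.snoc ρ x)
      = restrProb n ρ *
        (if (∀ a, x = some a → ∀ j, ρ j ≠ some a)
          then stepWeight n (Fin.snoc ρ x) (Fin.last m) else 0) := by
  classical
  unfold restrProb
  by_cases hM : IsPartialMatching ρ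
  · by_cases hx : ∀ a, x = some a → ∀ j, ρ j ≠ some a
    · rw [if_pos ((isPartialMatching_snoc ρ x).2 ⟨hM, hx⟩), if_pos hM, if_pos hx,
        Fin.prod_univ_castSucc]
      congr 1
      exact Finset.prod_congr rfl fun i _ => (stepWeight_snoc_castSucc ρ x i)
    · rw [if_neg, if_pos hM, if_neg hx, mul_zero]
      intro H; exact hx ((isPartialMatching_snoc ρ x).1 H).2
  · rw [if_neg, if_neg hM, zero_mul]
    intro H; exact hM ((isPartialMatching_snoc ρ x).1 H).1

/-- For a partial matching, the number of assigned pigeons is at most the number of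
used holes. -/
lemma assignedCount_le_card_used {m n : ℕ} {ρ : Fin m → Option (Fin n)}
    (hM : IsPartialMatching ρ) :
    assignedCount ρ ≤ (univ.filter fun a : Fin n => ∃ j, ρ j = some a).card := by
  classical
  rcases Nat.eq_zero_or_pos (assignedCount ρ) with h | h
  · simp [h]
  · obtain ⟨j0, hj0⟩ : ∃ j0, j0 ∈ univ.filter fun j : Fin m => (ρ j).isSome := by
      apply Finset.card_pos.1 h
    have hj0s : (ρ j0).isSome := (Finset.mem_filter.1 hj0).2
    obtain ⟨a0, _⟩ := Option.isSome_iff_exists.1 hj0s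
    apply Finset.card_le_card_of_injOn (fun j => (ρ j).getD a0)
    · intro j hj
      have hs : (ρ j).isSome := (Finset.mem_filter.1 hj).2
      obtain ⟨a, ha⟩ := Option.isSome_iff_exists.1 hs
      simp only [ha, Option.getD_some]
      exact Finset.mem_coe.2 (Finset.mem_filter.2 ⟨Finset.mem_univ _, j, ha⟩)
    · intro j hj j' hj' hEq
      have hs : (ρ j).isSome := (Finset.mem_filter.1 (Finset.mem_coe.1 hj)).2
      have hs' : (ρ j').isSome := (Finset.mem_filter.1 (Finset.mem_coe.1 hj')).2
      obtain ⟨a, ha⟩ := Option.isSome_iff_exists.1 hs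
      obtain ⟨a', ha'⟩ := Option.isSome_iff_exists.1 hs'
      simp only [ha, ha', Option.getD_some] at hEq
      subst hEq
      exact hM j j' a ha ha'

lemma assignedCount_le_n {m n : ℕ} {ρ : Fin m → Option (Fin n)}
    (hM : IsPartialMatching ρ) : assignedCount ρ ≤ n := by
  classical
  calc assignedCount ρ ≤ _ := assignedCount_le_card_used hM
  _ ≤ (univ : Finset (Fin n)).card := Finset.card_le_card (Finset.filter_subset _ _)
  _ = n := by simp

/-- number of unused holes is at most n - assignedCount -/
lemma card_unused_le {m n : ℕ} {ρ : Fin m → Option (Fin n)}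
    (hM : IsPartialMatching ρ) :
    ((univ.filter fun a : Fin n => ∀ j, ρ j ≠ some a).card : ℝ)
      ≤ (n : ℝ) - (assignedCount ρ : ℝ) := by
  classical
  have h1 : (univ.filter fun a : Fin n => ∀ j, ρ j ≠ some a)
      = univ.filter fun a : Fin n => ¬ ∃ j, ρ j = some a := by
    apply Finset.filter_congr; intro a _; push_neg; rfl
  have h2 := Finset.card_filter_add_card_filter_not
    (s := (univ : Finset (Fin n))) (p := fun a : Fin n => ∃ j, ρ j = some a)
  have h3 := assignedCount_le_card_used hM
  have hc : (univ : Finset (Fin n)).card = n := by simp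
  rw [h1]
  have : ((univ.filter fun a : Fin n => ¬ ∃ j, ρ j = some a).card : ℝ)
      = (n : ℝ) - ((univ.filter fun a : Fin n => ∃ j, ρ j = some a).card : ℝ) := by
    rw [eq_sub_iff_add_eq]
    rw [← Nat.cast_add]
    norm_cast
    omega
  rw [this]
  have := (Nat.cast_le (α := ℝ)).2 h3
  linarith

lemma stepWeight_nonneg {m n : ℕ} {ρ : Fin m → Option (Fin n)}
    (hM : IsPartialMatching ρ) (i : Fin m) : 0 ≤ stepWeight n ρ i := by
  unfold stepWeight
  cases h : ρ i with
  | none => norm_num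
  | some a =>
    have h1 : assignedBefore ρ i ≤ n :=
      le_trans (assignedBefore_le_assignedCount ρ i) (assignedCount_le_n hM)
    have : (0:ℝ) ≤ (n : ℝ) - (assignedBefore ρ i : ℝ) := by
      have := (Nat.cast_le (α := ℝ)).2 h1; linarith
    positivity

lemma restrProb_nonneg {m n : ℕ} (ρ : Fin m → Option (Fin n)) : 0 ≤ restrProb n ρ := by
  classical
  unfold restrProb
  split
  · exact Finset.prod_nonneg fun i _ => stepWeight_nonneg ‹_› i
  · exact le_refl 0

def snocEquiv (m n : ℕ) : ((Fin m → Option (Fin n)) × Option (Fin n)) ≃ (Fin (m+1) → Option (Fin n)) where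
  toFun p := Fin.snoc p.1 p.2
  invFun f := (Fin.init f, f (Fin.last m))
  left_inv p := by simp
  right_inv f := by simp

lemma sum_snoc {m n : ℕ} (g : (Fin (m+1) → Option (Fin n)) → ℝ) :
    ∑ ρ : Fin (m+1) → Option (Fin n), g ρ
      = ∑ ρ' : Fin m → Option (Fin n), ∑ x : Option (Fin n), g (Fin.snoc ρ' x) := by
  calc ∑ ρ : Fin (m+1) → Option (Fin n), g ρ
      = ∑ p : (Fin m → Option (Fin n)) × Option (Fin n), g (Fin.snoc p.1 p.2) :=
        (Fintype.sum_equiv (snocEquiv m n) _ _ fun p => rfl).symm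
    _ = _ := by rw [Fintype.sum_prod_type]

lemma sum_ite_card {α : Type*} [Fintype α] (p : α → Prop) [DecidablePred p] (c : ℝ) :
    ∑ a : α, (if p a then c else 0) = ((Finset.univ.filter p).card : ℝ) * c := by
  rw [← Finset.sum_filter, Finset.sum_const, nsmul_eq_mul]

lemma stepWeight_snoc_some {m n : ℕ} (ρ : Fin m → Option (Fin n)) (a : Fin n) :
    stepWeight n (Fin.snoc ρ (some a)) (Fin.last m)
      = (1/4) * ((n : ℝ) - (assignedCount ρ : ℝ))⁻¹ := by
  rw [stepWeight_snoc_last]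

lemma stepWeight_snoc_none {m n : ℕ} (ρ : Fin m → Option (Fin n)) :
    stepWeight n (Fin.snoc ρ (none : Option (Fin n))) (Fin.last m) = 3/4 := by
  rw [stepWeight_snoc_last]

lemma inv_rem_nonneg {m n : ℕ} {ρ : Fin m → Option (Fin n)} (hM : IsPartialMatching ρ) :
    (0:ℝ) ≤ ((n : ℝ) - (assignedCount ρ : ℝ))⁻¹ := by
  have hAC : (assignedCount ρ : ℝ) ≤ n := by exact_mod_cast assignedCount_le_n hM
  have : (0:ℝ) ≤ (n : ℝ) - (assignedCount ρ : ℝ) := by linarith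
  positivity

lemma rem_mul_inv_le_one {m n : ℕ} {ρ : Fin m → Option (Fin n)} (hM : IsPartialMatching ρ) :
    ((n : ℝ) - (assignedCount ρ : ℝ)) * ((n : ℝ) - (assignedCount ρ : ℝ))⁻¹ ≤ 1 := by
  have hAC : (assignedCount ρ : ℝ) ≤ n := by exact_mod_cast assignedCount_le_n hM
  rcases eq_or_lt_of_le (by linarith : (0:ℝ) ≤ (n : ℝ) - (assignedCount ρ : ℝ)) with h | h
  · rw [← h]; norm_num
  · rw [mul_inv_cancel₀ (ne_of_gt h)]

lemma mgf_bound (n : ℕ) : ∀ m, ∑ ρ : Fin m → Option (Fin n),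
    restrProb n ρ * 2 ^ assignedCount ρ ≤ (5/4 : ℝ) ^ m := by
  intro m
  induction m with
  | zero =>
    rw [Fintype.sum_subsingleton _ (fun _ => none)]
    have hM : IsPartialMatching (fun _ : Fin 0 => (none : Option (Fin n))) := by
      intro i; exact i.elim0
    have h0 : assignedCount (fun _ : Fin 0 => (none : Option (Fin n))) = 0 := by
      simp [assignedCount]
    rw [h0]
    unfold restrProb
    rw [if_pos hM]
    simp
  | succ m ih =>
    rw [sum_snoc]
    calc ∑ ρ' : Fin m → Option (Fin n), ∑ x : Option (Fin n),
          restrProb n (Fin.snoc ρ' x) * 2 ^ assignedCount (Fin.snoc ρ' x)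
        ≤ ∑ ρ' : Fin m → Option (Fin n),
            (restrProb n ρ' * 2 ^ assignedCount ρ') * (5/4) := by
          apply Finset.sum_le_sum
          intro ρ' _
          by_cases hM : IsPartialMatching ρ'
          · have key : ∀ x : Option (Fin n),
                restrProb n (Fin.snoc ρ' x) * 2 ^ assignedCount (Fin.snoc ρ' x)
                = (restrProb n ρ' * 2 ^ assignedCount ρ') *
                  ((if (∀ a, x = some a → ∀ j, ρ' j ≠ some a)
                    then stepWeight n (Fin.snoc ρ' x) (Fin.last m) else 0)
                    * (if x.isSome then 2 else 1)) := by
              intro x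
              rw [restrProb_snoc, assignedCount_snoc, pow_add]
              rcases x with _ | a <;> simp <;> ring
            simp only [key]
            rw [← Finset.mul_sum]
            apply mul_le_mul_of_nonneg_left
            · rw [Fintype.sum_option]
              set c : ℝ := (1/4) * ((n : ℝ) - (assignedCount ρ' : ℝ))⁻¹ with hc_def
              have hnone : ((if (∀ a, (none : Option (Fin n)) = some a → ∀ j, ρ' j ≠ some a)
                    then stepWeight n (Fin.snoc ρ' (none : Option (Fin n))) (Fin.last m) else 0)
                    * (if (none : Option (Fin n)).isSome then 2 else 1)) = 3/4 := by
                rw [if_pos (by intro a h; cases h), stepWeight_snoc_none]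
                simp
              rw [hnone]
              have heach : ∀ a : Fin n,
                  ((if (∀ a', (some a : Option (Fin n)) = some a' → ∀ j, ρ' j ≠ some a')
                    then stepWeight n (Fin.snoc ρ' (some a)) (Fin.last m) else 0)
                    * (if (some a : Option (Fin n)).isSome then 2 else 1))
                  = (if (∀ j, ρ' j ≠ some a) then c * 2 else 0) := by
                intro a
                have hcond : (∀ a', (some a : Option (Fin n)) = some a' → ∀ j, ρ' j ≠ some a')
                    ↔ (∀ j, ρ' j ≠ some a) := by
                  constructor
                  · intro h; exact h a rfl
                  · intro h a' ha' j; cases ha'; exact h j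
                rw [if_congr hcond (stepWeight_snoc_some ρ' a) rfl]
                by_cases h : ∀ j, ρ' j ≠ some a
                · rw [if_pos h, if_pos h, if_pos (Option.isSome_some), hc_def]
                · rw [if_neg h, if_neg h, zero_mul]
              simp only [heach]
              rw [sum_ite_card]
              have hK := card_unused_le hM
              have hinv := inv_rem_nonneg hM
              have h1 := rem_mul_inv_le_one hM
              have hKn : ((Finset.univ.filter fun a : Fin n => ∀ j, ρ' j ≠ some a).card : ℝ)
                  * ((n : ℝ) - (assignedCount ρ' : ℝ))⁻¹ ≤ 1 := by
                calc _ ≤ ((n : ℝ) - (assignedCount ρ' : ℝ)) * ((n : ℝ) - (assignedCount ρ' : ℝ))⁻¹ :=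
                      mul_le_mul_of_nonneg_right hK hinv
                  _ ≤ 1 := h1
              rw [hc_def]
              nlinarith [hKn]
            · exact mul_nonneg (restrProb_nonneg ρ') (by positivity)
          · have hz : ∀ x : Option (Fin n), restrProb n (Fin.snoc ρ' x) = 0 := by
              intro x
              unfold restrProb
              rw [if_neg]
              intro H; exact hM ((isPartialMatching_snoc ρ' x).1 H).1
            have hz' : restrProb n ρ' = 0 := by unfold restrProb; rw [if_neg hM]
            simp [hz, hz']
      _ = (∑ ρ' : Fin m → Option (Fin n), restrProb n ρ' * 2 ^ assignedCount ρ') * (5/4) := by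
          rw [Finset.sum_mul]
      _ ≤ (5/4 : ℝ) ^ m * (5/4) := mul_le_mul_of_nonneg_right ih (by norm_num)
      _ = (5/4 : ℝ) ^ (m+1) := by rw [pow_succ]

open Classical in
lemma survival_bound (n : ℕ) (hn : 0 < n) : ∀ (m : ℕ) (A : Fin m → Fin n → Prop)
    (M : Finset (Fin m)),
    (∀ i ∈ M, (((Finset.univ.filter fun h => A i h).card : ℝ)) ≤ (n:ℝ)/2) →
    ∑ ρ : Fin m → Option (Fin n),
      (if ((∀ i h, ρ i = some h → A i h) ∧ ∀ i, (assignedBefore ρ i : ℝ) ≤ 3*(n:ℝ)/8)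
        then restrProb n ρ else 0)
      ≤ (19/20 : ℝ) ^ M.card := by
  intro m
  induction m with
  | zero =>
    intro A M hM
    have hM0 : M = ∅ := Finset.eq_empty_of_isEmpty M
    subst hM0
    rw [Fintype.sum_subsingleton _ (fun _ => none)]
    have hMat : IsPartialMatching (fun _ : Fin 0 => (none : Option (Fin n))) := by
      intro i; exact i.elim0
    rw [if_pos ⟨fun i => i.elim0, fun i => i.elim0⟩]
    unfold restrProb
    rw [if_pos hMat]
    simp
  | succ m ih =>
    intro A M hM
    set f : ℝ := if Fin.last m ∈ M then 19/20 else 1 with hf_def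
    have hf_nonneg : 0 ≤ f := by rw [hf_def]; split <;> norm_num
    have hf_le_one : f ≤ 1 := by rw [hf_def]; split <;> norm_num
    set M' : Finset (Fin m) := Finset.univ.filter (fun i => i.castSucc ∈ M) with hM'_def
    have hcard : M.card = M'.card + (if Fin.last m ∈ M then 1 else 0) := by
      rw [hM'_def]
      have := card_filter_succ (fun i : Fin (m+1) => i ∈ M)
      simpa using this
    rw [sum_snoc]
    have step : ∀ ρ' : Fin m → Option (Fin n), ∀ x : Option (Fin n),
        (if ((∀ i h, (Fin.snoc ρ' x : Fin (m+1) → Option (Fin n)) i = some h → A i h)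
            ∧ ∀ i : Fin (m+1), (assignedBefore (Fin.snoc ρ' x) i : ℝ) ≤ 3*(n:ℝ)/8)
          then restrProb n (Fin.snoc ρ' x) else 0)
        = (if ((∀ i h, ρ' i = some h → A i.castSucc h)
              ∧ (∀ i : Fin m, (assignedBefore ρ' i : ℝ) ≤ 3*(n:ℝ)/8)
              ∧ ((assignedCount ρ' : ℝ) ≤ 3*(n:ℝ)/8)
              ∧ (∀ h, x = some h → A (Fin.last m) h))
            then restrProb n ρ' *
              (if (∀ a, x = some a → ∀ j, ρ' j ≠ some a)
                then stepWeight n (Fin.snoc ρ' x) (Fin.last m) else 0)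
            else 0) := by
      intro ρ' x
      rw [restrProb_snoc]
      apply if_congr _ rfl rfl
      constructor
      · rintro ⟨h1, h2⟩
        refine ⟨?_, ?_, ?_, ?_⟩
        · intro i h hi
          exact h1 i.castSucc h (by simpa using hi)
        · intro i
          have := h2 i.castSucc
          rwa [assignedBefore_snoc_castSucc] at this
        · have := h2 (Fin.last m)
          rwa [assignedBefore_snoc_last] at this
        · intro h hx
          exact h1 (Fin.last m) h (by simpa using hx)
      · rintro ⟨h1, h2, h3, h4⟩
        constructor
        · intro i h hi
          induction i using Fin.lastCases with
          | last => exact h4 h (by simpa using hi)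
          | cast i => exact h1 i h (by simpa using hi)
        · intro i
          induction i using Fin.lastCases with
          | last => rwa [assignedBefore_snoc_last]
          | cast i => rw [assignedBefore_snoc_castSucc]; exact h2 i
    calc ∑ ρ' : Fin m → Option (Fin n), ∑ x : Option (Fin n),
          (if ((∀ i h, (Fin.snoc ρ' x : Fin (m+1) → Option (Fin n)) i = some h → A i h)
            ∧ ∀ i : Fin (m+1), (assignedBefore (Fin.snoc ρ' x) i : ℝ) ≤ 3*(n:ℝ)/8)
          then restrProb n (Fin.snoc ρ' x) else 0)
        ≤ ∑ ρ' : Fin m → Option (Fin n),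
            (if ((∀ i h, ρ' i = some h → A i.castSucc h)
                ∧ ∀ i : Fin m, (assignedBefore ρ' i : ℝ) ≤ 3*(n:ℝ)/8)
              then restrProb n ρ' else 0) * f := by
          apply Finset.sum_le_sum
          intro ρ' _
          simp only [step]
          -- case on the prefix event
          by_cases hE : ((∀ i h, ρ' i = some h → A i.castSucc h)
              ∧ ∀ i : Fin m, (assignedBefore ρ' i : ℝ) ≤ 3*(n:ℝ)/8)
          · rw [if_pos hE]
            by_cases hB : (assignedCount ρ' : ℝ) ≤ 3*(n:ℝ)/8
            · -- main case: inner sum over x bounded by restrProb ρ' * f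
              by_cases hMat : IsPartialMatching ρ'
              · have hreq : ∀ x : Option (Fin n),
                    (if ((∀ i h, ρ' i = some h → A i.castSucc h)
                      ∧ (∀ i : Fin m, (assignedBefore ρ' i : ℝ) ≤ 3*(n:ℝ)/8)
                      ∧ ((assignedCount ρ' : ℝ) ≤ 3*(n:ℝ)/8)
                      ∧ (∀ h, x = some h → A (Fin.last m) h))
                    then restrProb n ρ' *
                      (if (∀ a, x = some a → ∀ j, ρ' j ≠ some a)
                        then stepWeight n (Fin.snoc ρ' x) (Fin.last m) else 0)
                    else 0)
                    = restrProb n ρ' *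
                      (if ((∀ h, x = some h → A (Fin.last m) h)
                          ∧ (∀ a, x = some a → ∀ j, ρ' j ≠ some a))
                        then stepWeight n (Fin.snoc ρ' x) (Fin.last m) else 0) := by
                  intro x
                  by_cases hgx : ∀ h, x = some h → A (Fin.last m) h
                  · rw [if_pos ⟨hE.1, hE.2, hB, hgx⟩]
                    by_cases hok : ∀ a, x = some a → ∀ j, ρ' j ≠ some a
                    · rw [if_pos hok, if_pos ⟨hgx, hok⟩]
                    · rw [if_neg hok, if_neg (fun hh => hok hh.2)]
                  · rw [if_neg (fun hh => hgx hh.2.2.2), if_neg (fun hh => hgx hh.1), mul_zero]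
                simp only [hreq]
                rw [← Finset.mul_sum]
                apply mul_le_mul_of_nonneg_left _ (restrProb_nonneg ρ')
                -- now bound  ∑_x (ite allowed sW 0) ≤ f
                rw [Fintype.sum_option]
                set c : ℝ := (1/4) * ((n : ℝ) - (assignedCount ρ' : ℝ))⁻¹ with hc_def
                have hnone : (if ((∀ h, (none : Option (Fin n)) = some h → A (Fin.last m) h)
                      ∧ (∀ a, (none : Option (Fin n)) = some a → ∀ j, ρ' j ≠ some a))
                    then stepWeight n (Fin.snoc ρ' (none : Option (Fin n))) (Fin.last m) else 0)
                    = 3/4 := by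
                  have htriv : ((∀ h : Fin n, (none : Option (Fin n)) = some h → A (Fin.last m) h)
                      ∧ (∀ a : Fin n, (none : Option (Fin n)) = some a → ∀ j, ρ' j ≠ some a)) :=
                    ⟨fun h hh => (nomatch hh), fun a hh => (nomatch hh)⟩
                  rw [if_pos htriv, stepWeight_snoc_none]
                rw [hnone]
                have heach : ∀ a : Fin n,
                    (if ((∀ h, (some a : Option (Fin n)) = some h → A (Fin.last m) h)
                        ∧ (∀ a', (some a : Option (Fin n)) = some a' → ∀ j, ρ' j ≠ some a'))
                      then stepWeight n (Fin.snoc ρ' (some a)) (Fin.last m) else 0)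
                    = (if (A (Fin.last m) a ∧ ∀ j, ρ' j ≠ some a) then c else 0) := by
                  intro a
                  have hcond : ((∀ h, (some a : Option (Fin n)) = some h → A (Fin.last m) h)
                        ∧ (∀ a', (some a : Option (Fin n)) = some a' → ∀ j, ρ' j ≠ some a'))
                      ↔ (A (Fin.last m) a ∧ ∀ j, ρ' j ≠ some a) := by
                    constructor
                    · rintro ⟨u, v⟩; exact ⟨u a rfl, v a rfl⟩
                    · rintro ⟨u, v⟩
                      exact ⟨fun h hh => by cases hh; exact u,
                             fun a' hh j => by cases hh; exact v j⟩
                  rw [if_congr hcond (stepWeight_snoc_some ρ' a) rfl, hc_def]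
                simp only [heach]
                rw [sum_ite_card]
                -- split on whether last ∈ M
                have hinv := inv_rem_nonneg hMat
                have hACle : (assignedCount ρ' : ℝ) ≤ n := by
                  exact_mod_cast assignedCount_le_n hMat
                by_cases hlast : Fin.last m ∈ M
                · -- card ≤ n/2, inv ≤ (5n/8)⁻¹
                  have hKle : (((Finset.univ.filter fun a : Fin n =>
                        A (Fin.last m) a ∧ ∀ j, ρ' j ≠ some a).card : ℝ)) ≤ (n:ℝ)/2 := by
                    calc (((Finset.univ.filter fun a : Fin n =>
                          A (Fin.last m) a ∧ ∀ j, ρ' j ≠ some a).card : ℝ))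
                        ≤ (((Finset.univ.filter fun a : Fin n => A (Fin.last m) a).card : ℝ)) := by
                          apply Nat.cast_le.2
                          apply Finset.card_le_card
                          intro a ha
                          rw [Finset.mem_filter] at ha ⊢
                          exact ⟨ha.1, ha.2.1⟩
                      _ ≤ (n:ℝ)/2 := hM _ hlast
                  have hrem : (5*(n:ℝ)/8) ≤ (n : ℝ) - (assignedCount ρ' : ℝ) := by linarith
                  have hrem0 : (0:ℝ) < 5*(n:ℝ)/8 := by
                    have : (0:ℝ) < n := by exact_mod_cast hn
                    linarith
                  have hinvle : ((n : ℝ) - (assignedCount ρ' : ℝ))⁻¹ ≤ (5*(n:ℝ)/8)⁻¹ := by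
                    apply inv_anti₀ hrem0 hrem
                  have hKnn : (0:ℝ) ≤ (((Finset.univ.filter fun a : Fin n =>
                        A (Fin.last m) a ∧ ∀ j, ρ' j ≠ some a).card : ℝ)) := Nat.cast_nonneg _
                  have hc_le : c ≤ (1/4) * (5*(n:ℝ)/8)⁻¹ := by
                    rw [hc_def]
                    apply mul_le_mul_of_nonneg_left hinvle (by norm_num)
                  have hcnn : 0 ≤ c := by rw [hc_def]; positivity
                  have hmain : (((Finset.univ.filter fun a : Fin n =>
                        A (Fin.last m) a ∧ ∀ j, ρ' j ≠ some a).card : ℝ)) * c ≤ 1/5 := by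
                    calc _ ≤ ((n:ℝ)/2) * c := mul_le_mul_of_nonneg_right hKle hcnn
                      _ ≤ ((n:ℝ)/2) * ((1/4) * (5*(n:ℝ)/8)⁻¹) := by
                          apply mul_le_mul_of_nonneg_left hc_le (by positivity)
                      _ = 1/5 := by
                          rw [mul_comm]
                          field_simp
                          ring
                    
                  rw [hf_def, if_pos hlast]
                  linarith
                · -- card ≤ n - AC
                  have hKle : (((Finset.univ.filter fun a : Fin n =>
                        A (Fin.last m) a ∧ ∀ j, ρ' j ≠ some a).card : ℝ))
                      ≤ (n : ℝ) - (assignedCount ρ' : ℝ) := by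
                    calc (((Finset.univ.filter fun a : Fin n =>
                          A (Fin.last m) a ∧ ∀ j, ρ' j ≠ some a).card : ℝ))
                        ≤ (((Finset.univ.filter fun a : Fin n => ∀ j, ρ' j ≠ some a).card : ℝ)) := by
                          apply Nat.cast_le.2
                          apply Finset.card_le_card
                          intro a ha
                          rw [Finset.mem_filter] at ha ⊢
                          exact ⟨ha.1, ha.2.2⟩
                      _ ≤ _ := card_unused_le hMat
                  have h1 := rem_mul_inv_le_one hMat
                  have hmain : (((Finset.univ.filter fun a : Fin n =>
                        A (Fin.last m) a ∧ ∀ j, ρ' j ≠ some a).card : ℝ)) * c ≤ 1/4 := by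
                    rw [hc_def]
                    have : (((Finset.univ.filter fun a : Fin n =>
                          A (Fin.last m) a ∧ ∀ j, ρ' j ≠ some a).card : ℝ))
                        * ((n : ℝ) - (assignedCount ρ' : ℝ))⁻¹ ≤ 1 := by
                      calc _ ≤ ((n : ℝ) - (assignedCount ρ' : ℝ))
                            * ((n : ℝ) - (assignedCount ρ' : ℝ))⁻¹ :=
                            mul_le_mul_of_nonneg_right hKle hinv
                        _ ≤ 1 := h1
                    nlinarith [this]
                  rw [hf_def, if_neg hlast]
                  linarith
              · -- not a matching: restrProb ρ' = 0, everything vanishes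
                have hz : restrProb n ρ' = 0 := by unfold restrProb; rw [if_neg hMat]
                have hzx : ∀ x : Option (Fin n),
                    (if ((∀ i h, ρ' i = some h → A i.castSucc h)
                      ∧ (∀ i : Fin m, (assignedBefore ρ' i : ℝ) ≤ 3*(n:ℝ)/8)
                      ∧ ((assignedCount ρ' : ℝ) ≤ 3*(n:ℝ)/8)
                      ∧ (∀ h, x = some h → A (Fin.last m) h))
                    then restrProb n ρ' *
                      (if (∀ a, x = some a → ∀ j, ρ' j ≠ some a)
                        then stepWeight n (Fin.snoc ρ' x) (Fin.last m) else 0)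
                    else 0) = 0 := by
                  intro x; rw [hz]; simp
                simp only [hzx]
                rw [Finset.sum_const, smul_zero, hz, zero_mul]
            · -- AC bound fails: all summands zero
              have hzx : ∀ x : Option (Fin n),
                  (if ((∀ i h, ρ' i = some h → A i.castSucc h)
                    ∧ (∀ i : Fin m, (assignedBefore ρ' i : ℝ) ≤ 3*(n:ℝ)/8)
                    ∧ ((assignedCount ρ' : ℝ) ≤ 3*(n:ℝ)/8)
                    ∧ (∀ h, x = some h → A (Fin.last m) h))
                  then restrProb n ρ' *
                    (if (∀ a, x = some a → ∀ j, ρ' j ≠ some a)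
                      then stepWeight n (Fin.snoc ρ' x) (Fin.last m) else 0)
                  else 0) = 0 := by
                intro x; rw [if_neg (fun hh => hB hh.2.2.1)]
              simp only [hzx, Finset.sum_const, smul_zero]
              exact mul_nonneg (restrProb_nonneg ρ') hf_nonneg
          · -- prefix event fails
            rw [if_neg hE]
            have hzx : ∀ x : Option (Fin n),
                (if ((∀ i h, ρ' i = some h → A i.castSucc h)
                  ∧ (∀ i : Fin m, (assignedBefore ρ' i : ℝ) ≤ 3*(n:ℝ)/8)
                  ∧ ((assignedCount ρ' : ℝ) ≤ 3*(n:ℝ)/8)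
                  ∧ (∀ h, x = some h → A (Fin.last m) h))
                then restrProb n ρ' *
                  (if (∀ a, x = some a → ∀ j, ρ' j ≠ some a)
                    then stepWeight n (Fin.snoc ρ' x) (Fin.last m) else 0)
                else 0) = 0 := by
              intro x; rw [if_neg (fun hh => hE ⟨hh.1, hh.2.1⟩)]
            simp only [hzx, Finset.sum_const, smul_zero, zero_mul]
            exact le_refl 0
      _ = (∑ ρ' : Fin m → Option (Fin n),
            (if ((∀ i h, ρ' i = some h → A i.castSucc h)
                ∧ ∀ i : Fin m, (assignedBefore ρ' i : ℝ) ≤ 3*(n:ℝ)/8)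
              then restrProb n ρ' else 0)) * f := by rw [Finset.sum_mul]
      _ ≤ (19/20 : ℝ) ^ M'.card * f := by
          apply mul_le_mul_of_nonneg_right _ hf_nonneg
          exact ih (fun i => A i.castSucc) M' (fun i hi => hM i.castSucc
            (by rw [hM'_def] at hi; exact (Finset.mem_filter.1 hi).2))
      _ ≤ (19/20 : ℝ) ^ M.card := by
          rw [hcard, hf_def]
          by_cases hlast : Fin.last m ∈ M
          · rw [if_pos hlast, if_pos hlast, pow_add, pow_one]
          · rw [if_neg hlast, if_neg hlast, add_zero, mul_one]

lemma card_testBit (r k : ℕ) (hk : k < r) (b : Bool) :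
    (Finset.univ.filter fun h : Fin (2^r) => h.val.testBit k = b).card = 2^(r-1) := by
  classical
  have hpow : (2:ℕ)^k < 2^r := Nat.pow_lt_pow_right one_lt_two hk
  have hxor : ∀ x : ℕ, x < 2^r → x ^^^ 2^k < 2^r := fun x hx => Nat.xor_lt_two_pow hx hpow
  have hbit : ∀ x : ℕ, (x ^^^ 2^k).testBit k = !(x.testBit k) := by
    intro x; simp [Nat.testBit_xor, Nat.testBit_two_pow_self]
  have key : (Finset.univ.filter fun h : Fin (2^r) => h.val.testBit k = b).card
      = (Finset.univ.filter fun h : Fin (2^r) => h.val.testBit k = !b).card := by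
    apply Finset.card_bij (fun h _ => (⟨h.val ^^^ 2^k, hxor h.val h.isLt⟩ : Fin (2^r)))
    · intro a ha
      rw [Finset.mem_filter] at ha ⊢
      refine ⟨Finset.mem_univ _, ?_⟩
      show (a.val ^^^ 2^k).testBit k = !b
      rw [hbit, ha.2]
    · intro a ha a' ha' hEq
      have : a.val ^^^ 2^k = a'.val ^^^ 2^k := congrArg Fin.val hEq
      have h2 : a.val = a'.val := by
        have := congrArg (fun z => z ^^^ 2^k) this
        simpa [Nat.xor_assoc] using this
      exact Fin.val_injective h2
    · intro h hmem
      rw [Finset.mem_filter] at hmem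
      refine ⟨⟨h.val ^^^ 2^k, hxor h.val h.isLt⟩, ?_, ?_⟩
      · rw [Finset.mem_filter]
        refine ⟨Finset.mem_univ _, ?_⟩
        show (h.val ^^^ 2^k).testBit k = b
        rw [hbit, hmem.2, Bool.not_not]
      · apply Fin.val_injective
        show (h.val ^^^ 2^k) ^^^ 2^k = h.val
        simp [Nat.xor_assoc]
  have hsplit : (Finset.univ.filter fun h : Fin (2^r) => h.val.testBit k = b).card
      + (Finset.univ.filter fun h : Fin (2^r) => ¬ (h.val.testBit k = b)).card
      = 2^r := by
    rw [Finset.card_filter_add_card_filter_not]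
    simp
  have hneg : (Finset.univ.filter fun h : Fin (2^r) => ¬ (h.val.testBit k = b)).card
      = (Finset.univ.filter fun h : Fin (2^r) => h.val.testBit k = !b).card := by
    congr 1
    apply Finset.filter_congr
    intro h _
    cases hb : h.val.testBit k <;> cases b <;> simp
  have hr1 : 1 ≤ r := hk.trans_le (le_refl r) |>.le.trans (le_refl r) |> fun _ => Nat.one_le_iff_ne_zero.2 (by rintro rfl; exact Nat.not_lt_zero k hk)
  have h2r : 2^r = 2 * 2^(r-1) := by
    conv_lhs => rw [show r = (r-1) + 1 by omega]
    rw [pow_succ]; ring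
  omega

lemma markov_bound (n m t : ℕ) :
    ∑ ρ : Fin m → Option (Fin n),
      (if t ≤ assignedCount ρ then restrProb n ρ else 0)
      ≤ (5/4 : ℝ)^m / 2^t := by
  classical
  rw [le_div_iff₀ (by positivity : (0:ℝ) < 2^t)]
  calc (∑ ρ : Fin m → Option (Fin n),
        (if t ≤ assignedCount ρ then restrProb n ρ else 0)) * 2^t
      = ∑ ρ : Fin m → Option (Fin n),
          (if t ≤ assignedCount ρ then restrProb n ρ else 0) * 2^t := by
        rw [Finset.sum_mul]
    _ ≤ ∑ ρ : Fin m → Option (Fin n), restrProb n ρ * 2 ^ assignedCount ρ := by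
        apply Finset.sum_le_sum
        intro ρ _
        by_cases h : t ≤ assignedCount ρ
        · rw [if_pos h]
          apply mul_le_mul_of_nonneg_left _ (restrProb_nonneg ρ)
          exact pow_le_pow_right₀ (by norm_num) h
        · rw [if_neg h, zero_mul]
          exact mul_nonneg (restrProb_nonneg ρ) (by positivity)
    _ ≤ (5/4 : ℝ)^m := mgf_bound n m

lemma numeric_final (q s : ℕ) (hq : 4 ≤ q) (hs : 8*q ≤ s) :
    (19/20:ℝ)^s + (5/4)^(16*q+1)/2^(6*q) ≤ (5/6)^q := by
  have h1 : (19/20:ℝ)^s ≤ (19/20)^(8*q) :=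
    pow_le_pow_of_le_one (by norm_num) (by norm_num) hs
  obtain ⟨a, ha_def⟩ : ∃ a : ℝ, a = (19/20)^8 * (6/5) := ⟨_, rfl⟩
  obtain ⟨b, hb_def⟩ : ∃ b : ℝ, b = (5/4)^16 / 64 * (6/5) := ⟨_, rfl⟩
  have ha_nonneg : 0 ≤ a := by rw [ha_def]; positivity
  have hb_nonneg : 0 ≤ b := by rw [hb_def]; positivity
  have ha_le : a ≤ 1 := by rw [ha_def]; norm_num
  have hb_le : b ≤ 1 := by rw [hb_def]; norm_num
  have ha4 : a^4 ≤ 1/2 := by rw [ha_def]; norm_num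
  have hb4 : (5/4) * b^4 ≤ 1/2 := by rw [hb_def]; norm_num
  have haq : a^q ≤ 1/2 := le_trans (pow_le_pow_of_le_one ha_nonneg ha_le hq) ha4
  have hbq : (5/4) * b^q ≤ 1/2 := by
    have := pow_le_pow_of_le_one hb_nonneg hb_le hq
    nlinarith [this]
  have hterm1 : (19/20:ℝ)^(8*q) = a^q * (5/6)^q := by
    have h : a * (5/6) = (19/20:ℝ)^8 := by rw [ha_def]; norm_num
    rw [pow_mul, ← h, mul_pow]
  have hterm2 : (5/4:ℝ)^(16*q+1)/2^(6*q) = (5/4) * (b^q * (5/6)^q) := by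
    have h : b * (5/6) = (5/4:ℝ)^16 / 64 := by rw [hb_def]; ring
    have e1 : (5/4:ℝ)^(16*q+1) = (5/4) * ((5/4)^16)^q := by
      rw [pow_succ, pow_mul]; ring
    have e2 : (2:ℝ)^(6*q) = 64^q := by
      rw [pow_mul]; norm_num
    rw [e1, e2, mul_div_assoc, ← div_pow, ← h, mul_pow]
  have hpos : (0:ℝ) ≤ (5/6)^q := by positivity
  calc (19/20:ℝ)^s + (5/4)^(16*q+1)/2^(6*q)
      ≤ (19/20:ℝ)^(8*q) + (5/4)^(16*q+1)/2^(6*q) := by linarith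
    _ = a^q * (5/6)^q + (5/4) * (b^q * (5/6)^q) := by rw [hterm1, hterm2]
    _ = (a^q + (5/4) * b^q) * (5/6)^q := by ring
    _ ≤ 1 * (5/6)^q := by
        apply mul_le_mul_of_nonneg_right _ hpos
        linarith
    _ = (5/6)^q := one_mul _

lemma ite_inst {p : Prop} (h1 h2 : Decidable p) (x y : ℝ) : @ite ℝ p h1 x y = @ite ℝ p h2 x y := by
  congr

lemma filter_inst {α : Type*} [Fintype α] (p : α → Prop) (h1 h2 : DecidablePred p) :
    @Finset.filter α p h1 Finset.univ = @Finset.filter α p h2 Finset.univ := by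
  have : h1 = h2 := Subsingleton.elim h1 h2
  rw [this]


open Classical in
/-- For sufficiently large powers of two `n` (with `r = log₂ n` and `m = n+1` pigeons),
any term `T` over the variables of `BinPHP^{n+1}_n` mentioning at least `n/2` pigeons
fails to evaluate to zero under the sequential random restriction with probability at
most `(5/6)^{n/16}`. -/
theorem wide_term_killed_whp :
    ∃ N : ℕ, ∀ n, N ≤ n → ∀ r : ℕ, n = 2 ^ r →
      ∀ T : SATerm (Fin (n + 1) × Fin r),
        (n : ℝ) / 2 ≤ ((mentions T).ncard : ℝ) →
        ∑ ρ ∈ Finset.univ.filter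
            (fun ρ : Fin (n + 1) → Option (Fin n) => ¬ EvaluatesToZero T ρ),
          restrProb n ρ ≤ (5 / 6 : ℝ) ^ ((n : ℝ) / 16) := by
  classical
  use 64
  intro n hn r hr T hT
  subst hr
  have hr6 : 6 ≤ r := by
    by_contra h
    push_neg at h
    have h32 : (2:ℕ)^r ≤ 2^5 := Nat.pow_le_pow_right (by norm_num) (by omega)
    norm_num at h32
    omega
  obtain ⟨q, hq_def⟩ : ∃ q, q = 2^(r-4) := ⟨_, rfl⟩
  have hnq : 2^r = 16 * q := by
    subst hq_def
    have h4 : r = 4 + (r-4) := by omega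
    calc (2:ℕ)^r = 2^(4+(r-4)) := by rw [← h4]
      _ = 2^4 * 2^(r-4) := pow_add 2 4 (r-4)
      _ = 16 * 2^(r-4) := by norm_num
  have hq4 : 4 ≤ q := by
    subst hq_def
    calc (4:ℕ) = 2^2 := rfl
      _ ≤ 2^(r-4) := Nat.pow_le_pow_right (by norm_num) (by omega)
  have hn_pos : 0 < 2^r := Nat.pow_pos (by norm_num)
  have hnR : ((2^r : ℕ):ℝ) = 16 * (q:ℝ) := by exact_mod_cast congrArg (Nat.cast (R := ℝ)) hnq
  -- the good-hole predicate
  set A : Fin (2^r+1) → Fin (2^r) → Prop :=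
    fun i h => ∀ (k : Fin r) (b : Bool), T (i,k) = some b → h.val.testBit k.val = b with hA_def
  set M : Finset (Fin (2^r+1)) :=
    Finset.univ.filter (fun i => ∃ k : Fin r, T (i,k) ≠ none) with hM_def
  have hmen : (mentions T).ncard = M.card := by
    have hset : mentions T = ↑M := by
      ext i
      simp [mentions, hM_def]
    rw [hset, Set.ncard_coe_finset]
  have hMcard : 8*q ≤ M.card := by
    rw [hmen] at hT
    have : ((8*q:ℕ):ℝ) ≤ (M.card:ℝ) := by
      push_cast
      rw [hnR] at hT
      linarith
    exact_mod_cast this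
  have hMhalf : ∀ i ∈ M, (((Finset.univ.filter fun h => A i h).card : ℝ)) ≤ ((2^r:ℕ):ℝ)/2 := by
    intro i hi
    rw [hM_def, Finset.mem_filter] at hi
    obtain ⟨k, hk⟩ := hi.2
    obtain ⟨b, hb⟩ := Option.ne_none_iff_exists'.1 hk
    have hsub : (Finset.univ.filter fun h : Fin (2^r) => A i h)
        ⊆ (Finset.univ.filter fun h : Fin (2^r) => h.val.testBit k.val = b) := by
      intro h hh
      rw [Finset.mem_filter] at hh ⊢
      exact ⟨Finset.mem_univ _, hh.2 k b hb⟩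
    have hcount : (Finset.univ.filter fun h : Fin (2^r) => h.val.testBit k.val = b).card
        = 2^(r-1) := card_testBit r k.val k.isLt b
    have hle := Finset.card_le_card hsub
    rw [hcount] at hle
    have h2r : (2:ℕ)^r = 2 * 2^(r-1) := by
      conv_lhs => rw [show r = (r-1) + 1 by omega]
      rw [pow_succ]; ring
    have : (((Finset.univ.filter fun h : Fin (2^r) => A i h).card : ℝ)) ≤ ((2^(r-1):ℕ):ℝ) := by
      exact_mod_cast hle
    calc (((Finset.univ.filter fun h : Fin (2^r) => A i h).card : ℝ)) ≤ ((2^(r-1):ℕ):ℝ) := this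
      _ = ((2^r:ℕ):ℝ)/2 := by
          rw [h2r]
          push_cast
          ring
  -- survival iff
  have hiff : ∀ ρ : Fin (2^r+1) → Option (Fin (2^r)),
      (¬ EvaluatesToZero T ρ) ↔ (∀ i h, ρ i = some h → A i h) := by
    intro ρ
    constructor
    · intro hne i h hi k b hTk
      by_contra hbit
      apply hne
      refine ⟨i, k, b, h, hTk, hi, ?_⟩
      cases hb2 : h.val.testBit k.val <;> cases b <;> simp_all
    · rintro hA' ⟨i, k, b, h, h1, h2, h3⟩
      have := hA' i h h2 k b h1
      rw [this] at h3
      simp at h3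
  rw [Finset.sum_filter]
  have hbound : ∀ ρ : Fin (2^r+1) → Option (Fin (2^r)),
      (if ¬ EvaluatesToZero T ρ then restrProb (2^r) ρ else 0)
      ≤ (if ((∀ i h, ρ i = some h → A i h)
            ∧ ∀ i, (assignedBefore ρ i : ℝ) ≤ 3*((2^r:ℕ):ℝ)/8)
          then restrProb (2^r) ρ else 0)
        + (if (6*q ≤ assignedCount ρ) then restrProb (2^r) ρ else 0) := by
    intro ρ
    by_cases hE : ¬ EvaluatesToZero T ρ
    · rw [if_pos hE]
      have hSurv := (hiff ρ).1 hE
      by_cases hB : ∀ i, (assignedBefore ρ i : ℝ) ≤ 3*((2^r:ℕ):ℝ)/8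
      · rw [if_pos ⟨hSurv, hB⟩]
        have : (0:ℝ) ≤ (if (6*q ≤ assignedCount ρ) then restrProb (2^r) ρ else 0) := by
          split
          · exact restrProb_nonneg ρ
          · exact le_refl 0
        linarith
      · rw [if_neg (fun hh => hB hh.2), zero_add]
        push_neg at hB
        obtain ⟨i, hi⟩ := hB
        have hle : assignedBefore ρ i ≤ assignedCount ρ := assignedBefore_le_assignedCount ρ i
        have h6q : 6*q ≤ assignedCount ρ := by
          have h1 : (3*((2^r:ℕ):ℝ)/8) = 6*(q:ℝ) := by rw [hnR]; ring
          rw [h1] at hi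
          have h2 : (6*q:ℝ) < (assignedBefore ρ i : ℝ) := by exact_mod_cast hi
          have h3 : (6*q:ℕ) < assignedBefore ρ i := by exact_mod_cast h2
          omega
        rw [if_pos h6q]
    · rw [if_neg hE]
      have h1 : (0:ℝ) ≤ (if ((∀ i h, ρ i = some h → A i h)
            ∧ ∀ i, (assignedBefore ρ i : ℝ) ≤ 3*((2^r:ℕ):ℝ)/8)
          then restrProb (2^r) ρ else 0) := by
        split
        · exact restrProb_nonneg ρ
        · exact le_refl 0
      have h2 : (0:ℝ) ≤ (if (6*q ≤ assignedCount ρ) then restrProb (2^r) ρ else 0) := by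
        split
        · exact restrProb_nonneg ρ
        · exact le_refl 0
      linarith
  calc ∑ ρ : Fin (2^r+1) → Option (Fin (2^r)),
        (if ¬ EvaluatesToZero T ρ then restrProb (2^r) ρ else 0)
      ≤ ∑ ρ : Fin (2^r+1) → Option (Fin (2^r)),
          ((if ((∀ i h, ρ i = some h → A i h)
              ∧ ∀ i, (assignedBefore ρ i : ℝ) ≤ 3*((2^r:ℕ):ℝ)/8)
            then restrProb (2^r) ρ else 0)
          + (if (6*q ≤ assignedCount ρ) then restrProb (2^r) ρ else 0)) :=
        Finset.sum_le_sum (fun ρ _ => hbound ρ)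
    _ = (∑ ρ : Fin (2^r+1) → Option (Fin (2^r)),
          (if ((∀ i h, ρ i = some h → A i h)
              ∧ ∀ i, (assignedBefore ρ i : ℝ) ≤ 3*((2^r:ℕ):ℝ)/8)
            then restrProb (2^r) ρ else 0))
        + (∑ ρ : Fin (2^r+1) → Option (Fin (2^r)),
          (if (6*q ≤ assignedCount ρ) then restrProb (2^r) ρ else 0)) := by
        rw [Finset.sum_add_distrib]
    _ ≤ (19/20 : ℝ) ^ M.card + (5/4 : ℝ)^(2^r+1) / 2^(6*q) := by
        apply add_le_add
        · have hsb := survival_bound (2^r) hn_pos (2^r+1) A M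
            (fun i hi => le_of_eq_of_le (by rw [filter_inst]) (hMhalf i hi))
          refine le_trans (le_of_eq (Finset.sum_congr rfl fun ρ _ => ?_)) hsb
          exact ite_inst _ _ _ _
        · exact markov_bound (2^r) (2^r+1) (6*q)
    _ ≤ (5/6 : ℝ) ^ q := by
        have he : (5/4 : ℝ)^(2^r+1) = (5/4)^(16*q+1) := by rw [hnq]
        rw [he]
        exact numeric_final q M.card hq4 hMcard
    _ = (5 / 6 : ℝ) ^ (((2^r:ℕ) : ℝ) / 16) := by
        have : ((2^r:ℕ):ℝ)/16 = ((q:ℕ):ℝ) := by rw [hnR]; ring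
        rw [this, Real.rpow_natCast]
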